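/- For every n, k, d ∈ ℕ with k ≤ 2^n, every down-closed subset T ⊆ {0,1}^n of size k contains at least binom(⌊log₂ k⌋, ≤d) elements of Hamming weight at most d, where binom(m, ≤d) = ∑_{i=0}^d C(m,i). -/

import Mathlib

/-- Binary weight (popcount) of a natural number. -/
def wtN : ℕ → ℕ := fun n =>
  if h : n = 0 then 0 else wtN (n / 2) + n % 2
decreasing_by exact Nat.div_lt_self (Nat.pos_of_ne_zero h) one_lt_two

lemma wtN_zero : wtN 0 = 0 := by rw [wtN]; simp

lemma wtN_two_mul (q : ℕ) : wtN (2 * q) = wtN q := by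
  rcases Nat.eq_zero_or_pos q with h | h
  · rw [h]
  · have hne : 2 * q ≠ 0 := by omega
    rw [wtN]
    simp [hne, Nat.mul_div_cancel_left, Nat.mul_mod_right]

lemma wtN_two_mul_add_one (q : ℕ) : wtN (2 * q + 1) = wtN q + 1 := by
  rw [wtN]
  have h1 : (2 * q + 1) / 2 = q := by omega
  have h2 : (2 * q + 1) % 2 = 1 := by omega
  simp [h1, h2]

/-- Number of `j < k` with binary weight `≤ d`. -/
def gN (k d : ℕ) : ℕ := ((Finset.range k).filter (fun j => wtN j ≤ d)).card

/-- Number of `j < k` with binary weight `< d`. -/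
def hN (k d : ℕ) : ℕ := ((Finset.range k).filter (fun j => wtN j < d)).card

lemma card_filter_range_succ (P : ℕ → Prop) [DecidablePred P] (m : ℕ) :
    ((Finset.range (m+1)).filter P).card
      = ((Finset.range m).filter P).card + (if P m then 1 else 0) := by
  rw [Finset.range_add_one, Finset.filter_insert]
  split
  · rw [Finset.card_insert_of_notMem (by simp)]
  · simp

lemma card_filter_range_split (P : ℕ → Prop) [DecidablePred P] :
    ∀ k, ((Finset.range k).filter P).card =
      ((Finset.range ((k+1)/2)).filter (fun q => P (2*q))).card +
      ((Finset.range (k/2)).filter (fun q => P (2*q+1))).card := by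
  intro k
  induction k with
  | zero => simp
  | succ k ih =>
    rcases Nat.even_or_odd k with ⟨m, hm⟩ | ⟨m, hm⟩
    · have e1 : (k+1+1)/2 = m+1 := by omega
      have e2 : (k+1)/2 = m := by omega
      have e3 : (k)/2 = m := by omega
      have e4 : 2*m = k := by omega
      rw [card_filter_range_succ P k, ih, e1, e2, e3,
        card_filter_range_succ (fun q => P (2*q)) m, e4]
      ring
    · have e1 : (k+1+1)/2 = m+1 := by omega
      have e2 : (k+1)/2 = m+1 := by omega
      have e3 : (k)/2 = m := by omega
      have e4 : 2*m+1 = k := by omega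
      rw [card_filter_range_succ P k, ih, e1, e2, e3,
        card_filter_range_succ (fun q => P (2*q+1)) m, e4]
      ring

lemma gN_rec (k d : ℕ) : gN k d = gN ((k+1)/2) d + hN (k/2) d := by
  unfold gN hN
  rw [card_filter_range_split (fun j => wtN j ≤ d) k]
  congr 1
  · exact congrArg Finset.card (Finset.filter_congr (by
      intro q _; simp [wtN_two_mul]))
  · exact congrArg Finset.card (Finset.filter_congr (by
      intro q _; simp [wtN_two_mul_add_one]))

lemma hN_rec (k d : ℕ) : hN k d = hN ((k+1)/2) d + hN (k/2) (d-1) := by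
  unfold hN
  rw [card_filter_range_split (fun j => wtN j < d) k]
  congr 1
  · exact congrArg Finset.card (Finset.filter_congr (by
      intro q _; simp [wtN_two_mul]))
  · exact congrArg Finset.card (Finset.filter_congr (by
      intro q _; simp [wtN_two_mul_add_one]; omega))

lemma hN_succ (k d : ℕ) :
    hN (k+1) d = hN k d + (if wtN k < d then 1 else 0) :=
  card_filter_range_succ _ k

lemma gN_zero (d : ℕ) : gN 0 d = 0 := by simp [gN]
lemma hN_zero (d : ℕ) : hN 0 d = 0 := by simp [hN]
lemma hN_zero' (k : ℕ) : hN k 0 = 0 := by simp [hN]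
lemma gN_one (d : ℕ) : gN 1 d = 1 := by
  simp [gN, Finset.range_one, Finset.filter_singleton, wtN_zero]
lemma hN_one (d : ℕ) : hN 1 d = if 0 < d then 1 else 0 := by
  simp [hN, Finset.range_one, Finset.filter_singleton, wtN_zero]
  split_ifs <;> simp

lemma gN_mono {a b : ℕ} (h : a ≤ b) (d : ℕ) : gN a d ≤ gN b d :=
  Finset.card_le_card (Finset.filter_subset_filter _ (Finset.range_subset_range.2 h))

lemma hN_swap (b e : ℕ) :
    hN b e + hN (b+1) (e-1) ≤ hN (b+1) e + hN b (e-1) := by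
  rw [hN_succ b e, hN_succ b (e-1)]
  have : (if wtN b < e-1 then 1 else 0) ≤ (if wtN b < e then 1 else 0) := by
    split_ifs <;> omega
  omega

lemma hB : ∀ a : ℕ, ∀ b ≤ a, ∀ d : ℕ, hN (a+b) d ≤ hN a d + hN b (d-1) := by
  intro a
  induction a using Nat.strong_induction_on with
  | _ a ih =>
    intro b hb d
    rcases Nat.eq_zero_or_pos b with rfl | hb1
    · simp [hN_zero']
    rcases lt_or_eq_of_le hb with hba | rfl
    · -- 1 ≤ b < a
      rcases Nat.even_or_odd a with ⟨a', ha⟩ | ⟨a', ha⟩ <;>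
        rcases Nat.even_or_odd b with ⟨b', hbe⟩ | ⟨b', hbe⟩
      · -- a = a'+a', b = b'+b'
        rw [show a+b = (a'+b')+(a'+b') by omega,
          hN_rec ((a'+b')+(a'+b')) d,
          show ((a'+b')+(a'+b')+1)/2 = a'+b' by omega,
          show ((a'+b')+(a'+b'))/2 = a'+b' by omega,
          hN_rec a d, show (a+1)/2 = a' by omega, show a/2 = a' by omega,
          hN_rec b (d-1), show (b+1)/2 = b' by omega, show b/2 = b' by omega]
        have i1 := ih a' (by omega) b' (by omega) d
        have i2 := ih a' (by omega) b' (by omega) (d-1)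
        omega
      · -- a = a'+a', b = 2b'+1
        rw [show a+b = (a'+(b'+1))+(a'+b') by omega,
          hN_rec ((a'+(b'+1))+(a'+b')) d,
          show ((a'+(b'+1))+(a'+b')+1)/2 = a'+(b'+1) by omega,
          show ((a'+(b'+1))+(a'+b'))/2 = a'+b' by omega,
          hN_rec a d, show (a+1)/2 = a' by omega, show a/2 = a' by omega,
          hN_rec b (d-1), show (b+1)/2 = b'+1 by omega, show b/2 = b' by omega]
        have i1 := ih a' (by omega) (b'+1) (by omega) d
        have i2 := ih a' (by omega) b' (by omega) (d-1)
        omega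
      · -- a = 2a'+1, b = b'+b'
        rw [show a+b = ((a'+1)+b')+(a'+b') by omega,
          hN_rec (((a'+1)+b')+(a'+b')) d,
          show (((a'+1)+b')+(a'+b')+1)/2 = (a'+1)+b' by omega,
          show (((a'+1)+b')+(a'+b'))/2 = a'+b' by omega,
          hN_rec a d, show (a+1)/2 = a'+1 by omega, show a/2 = a' by omega,
          hN_rec b (d-1), show (b+1)/2 = b' by omega, show b/2 = b' by omega]
        have i1 := ih (a'+1) (by omega) b' (by omega) d
        have i2 := ih a' (by omega) b' (by omega) (d-1)
        omega
      · -- a = 2a'+1, b = 2b'+1, b' < a'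
        rw [show a+b = ((a'+1)+b')+(a'+(b'+1)) by omega,
          hN_rec (((a'+1)+b')+(a'+(b'+1))) d,
          show (((a'+1)+b')+(a'+(b'+1))+1)/2 = (a'+1)+b' by omega,
          show (((a'+1)+b')+(a'+(b'+1)))/2 = a'+(b'+1) by omega,
          hN_rec a d, show (a+1)/2 = a'+1 by omega, show a/2 = a' by omega,
          hN_rec b (d-1), show (b+1)/2 = b'+1 by omega, show b/2 = b' by omega]
        have i1 := ih (a'+1) (by omega) b' (by omega) d
        have i2 := ih a' (by omega) (b'+1) (by omega) (d-1)
        have i3 := hN_swap b' (d-1)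
        omega
    · -- b = b (a = b)
      rw [hN_rec (b+b) d, show (b+b+1)/2 = b by omega, show (b+b)/2 = b by omega]

lemma gB : ∀ a : ℕ, ∀ b ≤ a, ∀ d : ℕ, gN (a+b) d ≤ gN a d + hN b d := by
  intro a
  induction a using Nat.strong_induction_on with
  | _ a ih =>
    intro b hb d
    rcases Nat.eq_zero_or_pos b with rfl | hb1
    · simp [hN_zero]
    rcases lt_or_eq_of_le hb with hba | rfl
    · rcases Nat.even_or_odd a with ⟨a', ha⟩ | ⟨a', ha⟩ <;>
        rcases Nat.even_or_odd b with ⟨b', hbe⟩ | ⟨b', hbe⟩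
      · rw [show a+b = (a'+b')+(a'+b') by omega,
          gN_rec ((a'+b')+(a'+b')) d,
          show ((a'+b')+(a'+b')+1)/2 = a'+b' by omega,
          show ((a'+b')+(a'+b'))/2 = a'+b' by omega,
          gN_rec a d, show (a+1)/2 = a' by omega, show a/2 = a' by omega,
          hN_rec b d, show (b+1)/2 = b' by omega, show b/2 = b' by omega]
        have i1 := ih a' (by omega) b' (by omega) d
        have i2 := hB a' b' (by omega) d
        omega
      · rw [show a+b = (a'+(b'+1))+(a'+b') by omega,
          gN_rec ((a'+(b'+1))+(a'+b')) d,
          show ((a'+(b'+1))+(a'+b')+1)/2 = a'+(b'+1) by omega,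
          show ((a'+(b'+1))+(a'+b'))/2 = a'+b' by omega,
          gN_rec a d, show (a+1)/2 = a' by omega, show a/2 = a' by omega,
          hN_rec b d, show (b+1)/2 = b'+1 by omega, show b/2 = b' by omega]
        have i1 := ih a' (by omega) (b'+1) (by omega) d
        have i2 := hB a' b' (by omega) d
        omega
      · rw [show a+b = ((a'+1)+b')+(a'+b') by omega,
          gN_rec (((a'+1)+b')+(a'+b')) d,
          show (((a'+1)+b')+(a'+b')+1)/2 = (a'+1)+b' by omega,
          show (((a'+1)+b')+(a'+b'))/2 = a'+b' by omega,
          gN_rec a d, show (a+1)/2 = a'+1 by omega, show a/2 = a' by omega,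
          hN_rec b d, show (b+1)/2 = b' by omega, show b/2 = b' by omega]
        have i1 := ih (a'+1) (by omega) b' (by omega) d
        have i2 := hB a' b' (by omega) d
        omega
      · rw [show a+b = ((a'+1)+b')+(a'+(b'+1)) by omega,
          gN_rec (((a'+1)+b')+(a'+(b'+1))) d,
          show (((a'+1)+b')+(a'+(b'+1))+1)/2 = (a'+1)+b' by omega,
          show (((a'+1)+b')+(a'+(b'+1)))/2 = a'+(b'+1) by omega,
          gN_rec a d, show (a+1)/2 = a'+1 by omega, show a/2 = a' by omega,
          hN_rec b d, show (b+1)/2 = b'+1 by omega, show b/2 = b' by omega]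
        have i1 := ih (a'+1) (by omega) b' (by omega) d
        have i2 := hB a' (b'+1) (by omega) d
        have i3 := hN_swap b' d
        omega
    · rw [gN_rec (b+b) d, show (b+b+1)/2 = b by omega, show (b+b)/2 = b by omega]

lemma pascal_sum (m d : ℕ) :
    ∑ i ∈ Finset.range (d+1), (m+1).choose i
      = ∑ i ∈ Finset.range (d+1), m.choose i + ∑ i ∈ Finset.range d, m.choose i := by
  induction d with
  | zero => simp
  | succ d ih =>
    rw [Finset.sum_range_succ, ih, Finset.sum_range_succ (fun i => m.choose i) (d+1),
      Finset.sum_range_succ (fun i => m.choose i) d, Nat.choose_succ_succ]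
    ring

lemma pow_bound : ∀ m : ℕ,
    (∀ d, ∑ i ∈ Finset.range (d+1), m.choose i ≤ gN (2^m) d) ∧
    (∀ d, ∑ i ∈ Finset.range d, m.choose i ≤ hN (2^m) d) := by
  intro m
  induction m with
  | zero =>
    constructor
    · intro d
      rw [pow_zero, gN_one]
      rw [Finset.sum_range_succ' (fun i => Nat.choose 0 i) d]
      simp
    · intro d
      rw [pow_zero, hN_one]
      cases d with
      | zero => simp
      | succ e =>
        rw [Finset.sum_range_succ' (fun i => Nat.choose 0 i) e]
        simp
  | succ m ih =>
    obtain ⟨ihg, ihh⟩ := ih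
    have e : 2^(m+1) = 2^m + 2^m := by rw [pow_succ]; ring
    have t1 : ∀ K : ℕ, (K+K+1)/2 = K := fun K => by omega
    have t2 : ∀ K : ℕ, (K+K)/2 = K := fun K => by omega
    constructor
    · intro d
      rw [pascal_sum, e, gN_rec (2^m + 2^m) d, t1, t2]
      exact add_le_add (ihg d) (ihh d)
    · intro d
      rw [e, hN_rec (2^m + 2^m) d, t1, t2]
      cases d with
      | zero => simp
      | succ e' =>
        rw [pascal_sum m e']
        simp only [Nat.add_sub_cancel]
        exact add_le_add (ihh (e'+1)) (ihh e')

lemma card_slice {n : ℕ} (T : Finset (Fin (n+1) → Fin 2)) (b : Fin 2)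
    (Q : (Fin (n+1) → Fin 2) → Prop) [DecidablePred Q] :
    (T.filter (fun x => x 0 = b ∧ Q x)).card
      = (((T.filter (fun x => x 0 = b)).image Fin.tail).filter
          (fun y => Q (Fin.cons b y))).card := by
  classical
  refine Finset.card_bij' (fun x _ => Fin.tail x) (fun y _ => Fin.cons b y)
    ?_ ?_ ?_ ?_
  · intro x hx
    rw [Finset.mem_filter] at hx
    obtain ⟨hxT, hxb, hxQ⟩ := hx
    rw [Finset.mem_filter]
    constructor
    · exact Finset.mem_image_of_mem _ (Finset.mem_filter.2 ⟨hxT, hxb⟩)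
    · show Q (Fin.cons b (Fin.tail x))
      rw [← hxb, Fin.cons_self_tail]
      exact hxQ
  · intro y hy
    rw [Finset.mem_filter] at hy
    obtain ⟨hyI, hyQ⟩ := hy
    rw [Finset.mem_image] at hyI
    obtain ⟨x, hx, hxy⟩ := hyI
    rw [Finset.mem_filter] at hx
    have hxc : Fin.cons b y = x := by
      rw [← hxy, ← hx.2, Fin.cons_self_tail]
    show (Fin.cons b y : Fin (n+1) → Fin 2) ∈ _
    refine Finset.mem_filter.2 ⟨?_, ?_, hyQ⟩
    · rw [hxc]; exact hx.1
    · simp [Fin.cons_zero]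
  · intro x hx
    rw [Finset.mem_filter] at hx
    show Fin.cons b (Fin.tail x) = x
    rw [← hx.2.1, Fin.cons_self_tail]
  · intro y _
    beta_reduce
    exact Fin.tail_cons (α := fun _ => Fin 2) b y

lemma wsplit {n : ℕ} (T : Finset (Fin (n+1) → Fin 2)) (P : ℕ → Prop) [DecidablePred P] :
    (T.filter (fun x => P (∑ i, (x i : ℕ)))).card
      = (((T.filter (fun x => x 0 = 0)).image Fin.tail).filter
          (fun y => P (∑ i, (y i : ℕ)))).card
      + (((T.filter (fun x => x 0 = 1)).image Fin.tail).filter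
          (fun y => P (1 + ∑ i, (y i : ℕ)))).card := by
  classical
  have key := Finset.card_filter_add_card_filter_not
    (s := T.filter (fun x => P (∑ i, (x i : ℕ)))) (p := fun x => x 0 = 0)
  have hv : ∀ v : Fin 2, ¬(v = 0) ↔ (v = 1) := by decide
  have hng : Finset.filter (fun x => ¬ (x 0 = 0)) (T.filter (fun x => P (∑ i, (x i : ℕ))))
      = Finset.filter (fun x => x 0 = 1) (T.filter (fun x => P (∑ i, (x i : ℕ)))) :=
    Finset.filter_congr (fun x _ => hv (x 0))
  have comb : ∀ b : Fin 2,
      Finset.filter (fun x => x 0 = b) (T.filter (fun x => P (∑ i, (x i : ℕ))))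
        = T.filter (fun x => x 0 = b ∧ P (∑ i, (x i : ℕ))) := by
    intro b
    rw [Finset.filter_filter]
    exact Finset.filter_congr (fun x _ => and_comm)
  rw [hng, comb 0, comb 1,
    card_slice T 0 (fun x => P (∑ i, (x i : ℕ))),
    card_slice T 1 (fun x => P (∑ i, (x i : ℕ)))] at key
  rw [← key]
  congr 1
  · apply congrArg Finset.card
    apply Finset.filter_congr
    intro y _
    have hs : (∑ i, (((Fin.cons (0 : Fin 2) y : Fin (n+1) → Fin 2)) i : ℕ)) = ∑ i, (y i : ℕ) := by
      rw [Fin.sum_univ_succ]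
      simp [Fin.cons_succ]
    rw [hs]
  · apply congrArg Finset.card
    apply Finset.filter_congr
    intro y _
    have hs : (∑ i, (((Fin.cons (1 : Fin 2) y : Fin (n+1) → Fin 2)) i : ℕ)) = 1 + ∑ i, (y i : ℕ) := by
      rw [Fin.sum_univ_succ]
      simp [Fin.cons_succ]
    rw [hs]

lemma iffA (s d : ℕ) : 1 + s ≤ d ↔ s < d := by omega
lemma iffB (s d : ℕ) : 1 + s < d ↔ s < d - 1 := by omega

lemma main_lemma : ∀ n : ℕ, ∀ (T : Finset (Fin n → Fin 2)),
    (∀ x y : Fin n → Fin 2, (∀ i, (x i : ℕ) ≤ (y i : ℕ)) → y ∈ T → x ∈ T) →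
    ∀ d : ℕ,
    gN T.card d ≤ (T.filter (fun x => (∑ i, (x i : ℕ)) ≤ d)).card ∧
    hN T.card d ≤ (T.filter (fun x => (∑ i, (x i : ℕ)) < d)).card := by
  intro n
  induction n with
  | zero =>
    intro T _ d
    have hle : T.card ≤ 1 := by
      have h1 := Finset.card_le_univ T
      simpa using h1
    have hfe : ∀ x : Fin 0 → Fin 2, (∑ i, (x i : ℕ)) = 0 := fun x => by simp
    rcases Nat.le_one_iff_eq_zero_or_eq_one.mp hle with h | h
    · rw [h, gN_zero, hN_zero]
      simp
    · rw [h, gN_one, hN_one]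
      constructor
      · have he : T.filter (fun x => (∑ i, (x i : ℕ)) ≤ d) = T :=
          Finset.filter_true_of_mem (fun x _ => by rw [hfe x]; omega)
        rw [he, h]
      · split_ifs with hd
        · have he : T.filter (fun x => (∑ i, (x i : ℕ)) < d) = T :=
            Finset.filter_true_of_mem (fun x _ => by rw [hfe x]; omega)
          rw [he, h]
        · exact Nat.zero_le _
  | succ n ih =>
    intro T hdown d
    have hmem : ∀ (b : Fin 2) (y : Fin n → Fin 2),
        y ∈ (T.filter (fun x => x 0 = b)).image Fin.tail ↔ Fin.cons b y ∈ T := by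
      intro b y
      constructor
      · intro hy
        rw [Finset.mem_image] at hy
        obtain ⟨x, hx, rfl⟩ := hy
        rw [Finset.mem_filter] at hx
        rw [← hx.2, Fin.cons_self_tail]
        exact hx.1
      · intro hy
        refine Finset.mem_image.2 ⟨Fin.cons b y, Finset.mem_filter.2 ⟨hy, ?_⟩, ?_⟩
        · simp
        · exact Fin.tail_cons (α := fun _ => Fin 2) b y
    have hdownb : ∀ b : Fin 2, ∀ x y : Fin n → Fin 2, (∀ i, (x i : ℕ) ≤ (y i : ℕ)) →
        y ∈ (T.filter (fun x => x 0 = b)).image Fin.tail →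
        x ∈ (T.filter (fun x => x 0 = b)).image Fin.tail := by
      intro b x y hxy hy
      refine (hmem b x).2 (hdown _ (Fin.cons b y) ?_ ((hmem b y).1 hy))
      intro i
      refine Fin.cases ?_ ?_ i
      · simp
      · intro j
        simp only [Fin.cons_succ]
        exact hxy j
    have hsub : (T.filter (fun x => x 0 = 1)).image Fin.tail ⊆
        (T.filter (fun x => x 0 = 0)).image Fin.tail := by
      intro y hy
      refine (hmem 0 y).2 (hdown (Fin.cons 0 y) (Fin.cons 1 y) ?_ ((hmem 1 y).1 hy))
      intro i
      refine Fin.cases ?_ ?_ i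
      · simp
      · intro j
        simp [Fin.cons_succ]
    have hinj : ∀ b : Fin 2, Set.InjOn (fun x : Fin (n+1) → Fin 2 => Fin.tail x)
        ↑(T.filter (fun x => x 0 = b)) := by
      intro b x hx y hy hxy
      rw [Finset.mem_coe, Finset.mem_filter] at hx hy
      have hxy' : Fin.tail x = Fin.tail y := hxy
      calc x = Fin.cons b (Fin.tail x) := by rw [← hx.2, Fin.cons_self_tail]
        _ = Fin.cons b (Fin.tail y) := by rw [hxy']
        _ = y := by rw [← hy.2, Fin.cons_self_tail]
    have hv : ∀ v : Fin 2, ¬(v = 0) ↔ (v = 1) := by decide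
    have hcard01 : T.card = ((T.filter (fun x => x 0 = 0)).image Fin.tail).card
        + ((T.filter (fun x => x 0 = 1)).image Fin.tail).card := by
      rw [Finset.card_image_of_injOn (hinj 0), Finset.card_image_of_injOn (hinj 1)]
      have key := Finset.card_filter_add_card_filter_not
        (s := T) (p := fun x => x 0 = 0)
      have hng : Finset.filter (fun x => ¬ (x 0 = 0)) T
          = Finset.filter (fun x => x 0 = 1) T :=
        Finset.filter_congr (fun x _ => hv (x 0))
      rw [hng] at key
      exact key.symm
    have hle10 := Finset.card_le_card hsub
    have I0 := ih _ (hdownb 0)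
    have I1 := ih _ (hdownb 1)
    constructor
    · rw [wsplit T (fun t => t ≤ d), hcard01]
      have e2 : ((T.filter (fun x => x 0 = 1)).image Fin.tail).filter
            (fun y => 1 + (∑ i, (y i : ℕ)) ≤ d)
          = ((T.filter (fun x => x 0 = 1)).image Fin.tail).filter
            (fun y => (∑ i, (y i : ℕ)) < d) :=
        Finset.filter_congr (fun y _ => iffA _ d)
      rw [e2]
      exact le_trans (gB _ _ hle10 d) (add_le_add (I0 d).1 (I1 d).2)
    · rw [wsplit T (fun t => t < d), hcard01]
      have e2 : ((T.filter (fun x => x 0 = 1)).image Fin.tail).filter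
            (fun y => 1 + (∑ i, (y i : ℕ)) < d)
          = ((T.filter (fun x => x 0 = 1)).image Fin.tail).filter
            (fun y => (∑ i, (y i : ℕ)) < d - 1) :=
        Finset.filter_congr (fun y _ => iffB _ d)
      rw [e2]
      exact le_trans (hB _ _ hle10 d) (add_le_add (I0 d).2 (I1 (d-1)).2)

/-- Every down-closed subset `T ⊆ {0,1}^n` of size `k ≥ 1` contains at least
`∑_{i=0}^d C(⌊log₂ k⌋, i)` elements of Hamming weight at most `d`. -/
theorem stmt8 (n k d : ℕ) (hk1 : 1 ≤ k) (hk : k ≤ 2 ^ n)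
    (T : Finset (Fin n → Fin 2))
    (hdown : ∀ x y : Fin n → Fin 2, (∀ i, (x i : ℕ) ≤ (y i : ℕ)) → y ∈ T → x ∈ T)
    (hcard : T.card = k) :
    ∑ i ∈ Finset.range (d + 1), (Nat.log 2 k).choose i ≤
      (T.filter (fun x => (∑ i, (x i : ℕ)) ≤ d)).card := by
  have h2m : 2 ^ (Nat.log 2 k) ≤ k := Nat.pow_log_le_self 2 (by omega)
  calc ∑ i ∈ Finset.range (d+1), (Nat.log 2 k).choose i
      ≤ gN (2 ^ (Nat.log 2 k)) d := (pow_bound (Nat.log 2 k)).1 d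
    _ ≤ gN k d := gN_mono h2m d
    _ = gN T.card d := by rw [hcard]
    _ ≤ _ := (main_lemma n T hdown d).1
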